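/- Two-sided norm bound for the infinitesimal gluing map: let T ≥ 3, x₀ ∈ ℝ^{n−k} and y₀ ∈ ℝ^k. Define ξ(s) := (e^{−sA₊}x₀, 0) for s ≥ 0, η(s) := (0, e^{sA₋}y₀) for s ≤ 0, and ζ(s) := (e^{−(s+T)A₊}x₀, e^{(s−T)A₋}y₀) for s ∈ [−T,T]. Then (1 − e^{−12σ}) · (‖ξ‖²_{W^{1,2}([0,∞))} + ‖η‖²_{W^{1,2}((−∞,0])}) ≤ ‖ζ‖²_{W^{1,2}([−T,T])} ≤ ‖ξ‖²_{W^{1,2}([0,∞))} + ‖η‖²_{W^{1,2}((−∞,0])}. In particular the linear map Γ_T : (x₀,y₀) ↦ ζ is injective with norm at most 1 and inverse bounded uniformly in T. -/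
import Mathlib


open Set MeasureTheory

private lemma norm_sq_eucl {n : ℕ} (v : EuclideanSpace ℝ (Fin n)) :
    ‖v‖ ^ 2 = ∑ i, (v i) ^ 2 := by
  rw [EuclideanSpace.norm_eq, Real.sq_sqrt (by positivity)]
  simp [Real.norm_eq_abs, sq_abs]

private lemma exp_int_aux {b : ℝ} (hb : 0 < b) (c : ℝ) :
    ∫ x in Ioi c, Real.exp (-b * x) = Real.exp (-b * c) / b := by
  have h := integral_comp_mul_left_Ioi (fun x => Real.exp (-x)) c hb
  simp only [smul_eq_mul, integral_exp_neg_Ioi, neg_mul] at h ⊢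
  rw [h]; ring

private lemma aux_main {n : ℕ} (b c : Fin n → ℝ) (hc : ∀ i, 0 ≤ c i)
    (σ T : ℝ) (hσ : 0 < σ) (hT : 3 ≤ T) (hb : ∀ i, c i ≠ 0 → σ ≤ b i) :
    (1 - Real.exp (-(12 * σ))) *
        (∫ u in Ioi (0:ℝ), ∑ i, c i * Real.exp (-(2 * b i) * u)) ≤
      (∫ u in Ioc (0:ℝ) (2*T), ∑ i, c i * Real.exp (-(2 * b i) * u)) ∧
    (∫ u in Ioc (0:ℝ) (2*T), ∑ i, c i * Real.exp (-(2 * b i) * u)) ≤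
      ∫ u in Ioi (0:ℝ), ∑ i, c i * Real.exp (-(2 * b i) * u) := by
  have h2T : (0:ℝ) ≤ 2 * T := by linarith
  have hti : ∀ (i : Fin n) (s0 : ℝ),
      IntegrableOn (fun u => c i * Real.exp (-(2 * b i) * u)) (Ioi s0) := by
    intro i s0
    by_cases h : c i = 0
    · simp [h]
    · have hbi : 0 < 2 * b i := by have := hb i h; linarith
      exact (exp_neg_integrableOn_Ioi s0 hbi).const_mul _
  have hFi : IntegrableOn (fun u => ∑ i, c i * Real.exp (-(2 * b i) * u)) (Ioi (0:ℝ)) :=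
    integrable_finset_sum _ fun i _ => hti i 0
  have hFi2 : IntegrableOn (fun u => ∑ i, c i * Real.exp (-(2 * b i) * u)) (Ioi (2*T)) :=
    integrable_finset_sum _ fun i _ => hti i (2*T)
  have hFioc : IntegrableOn (fun u => ∑ i, c i * Real.exp (-(2 * b i) * u)) (Ioc (0:ℝ) (2*T)) :=
    hFi.mono_set Ioc_subset_Ioi_self
  have hsplit :
      (∫ u in Ioi (0:ℝ), ∑ i, c i * Real.exp (-(2 * b i) * u)) =
        (∫ u in Ioc (0:ℝ) (2*T), ∑ i, c i * Real.exp (-(2 * b i) * u)) +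
        ∫ u in Ioi (2*T), ∑ i, c i * Real.exp (-(2 * b i) * u) := by
    rw [← setIntegral_union Ioc_disjoint_Ioi_same measurableSet_Ioi hFioc hFi2,
      Ioc_union_Ioi_eq_Ioi h2T]
  have htail :
      (∫ u in Ioi (2*T), ∑ i, c i * Real.exp (-(2 * b i) * u)) ≤
        Real.exp (-(12 * σ)) * ∫ u in Ioi (0:ℝ), ∑ i, c i * Real.exp (-(2 * b i) * u) := by
    rw [integral_finset_sum _ fun i _ => hti i (2*T),
      integral_finset_sum _ fun i _ => hti i 0, Finset.mul_sum]
    apply Finset.sum_le_sum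
    intro i _
    by_cases h : c i = 0
    · simp [h]
    · have hbi : σ ≤ b i := hb i h
      have hbi0 : 0 < b i := lt_of_lt_of_le hσ hbi
      have h2b : 0 < 2 * b i := by linarith
      rw [MeasureTheory.integral_const_mul, MeasureTheory.integral_const_mul, exp_int_aux h2b, exp_int_aux h2b]
      have hexp : Real.exp (-(2 * b i) * (2*T)) ≤ Real.exp (-(12 * σ)) := by
        apply Real.exp_le_exp.mpr
        nlinarith
      calc c i * (Real.exp (-(2 * b i) * (2*T)) / (2 * b i))
          ≤ c i * (Real.exp (-(12 * σ)) / (2 * b i)) := by gcongr; exact hc i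
        _ = Real.exp (-(12 * σ)) * (c i * (Real.exp (-(2 * b i) * 0) / (2 * b i))) := by
            rw [mul_zero, Real.exp_zero]; ring
  have htail0 : 0 ≤ ∫ u in Ioi (2*T), ∑ i, c i * Real.exp (-(2 * b i) * u) := by
    apply setIntegral_nonneg measurableSet_Ioi
    intro u _
    apply Finset.sum_nonneg
    intro i _
    exact mul_nonneg (hc i) (Real.exp_nonneg _)
  constructor
  · nlinarith [hsplit, htail]
  · linarith [hsplit, htail0]

/-- **Two-sided norm bound for the infinitesimal gluing map.** Let
`A = diag(a₁,…,aₙ)` with `a₁ ≥ … ≥ a_{n-k} > 0 > a_{n-k+1} ≥ … ≥ aₙ` and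
spectral gap `σ = min_ℓ |a_ℓ|`.  Let `T ≥ 3`, `x₀ ∈ ℝ^{n-k}`, `y₀ ∈ ℝ^k`.
With `ξ(s) = (e^{-sA₊} x₀, 0)`, `η(s) = (0, e^{sA₋} y₀)` and
`ζ(s) = (e^{-(s+T)A₊} x₀, e^{(s-T)A₋} y₀)` one has
`(1 - e^{-12σ}) (‖ξ‖² + ‖η‖²) ≤ ‖ζ‖²_{W^{1,2}([-T,T])} ≤ ‖ξ‖² + ‖η‖²`
(with the `W^{1,2}`-norms of `ξ`, `η` over `[0,∞)` resp. `(-∞,0]`).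
In particular the infinitesimal gluing map `Γ_T : (x₀,y₀) ↦ ζ` is an injection
of norm at most `1` whose inverse is bounded uniformly in `T`. -/
theorem infinitesimal_gluing_two_sided_bound (n k : ℕ) (hn : 1 ≤ n) (hkn : k ≤ n)
    (a : Fin n → ℝ)
    (ha_mono : ∀ i j : Fin n, i ≤ j → a j ≤ a i)
    (ha_pos : ∀ i : Fin n, (i : ℕ) < n - k → 0 < a i)
    (ha_neg : ∀ i : Fin n, n - k ≤ (i : ℕ) → a i < 0)
    (σ : ℝ) (hσ : σ = ⨅ i : Fin n, |a i|)
    (T : ℝ) (hT : 3 ≤ T)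
    (x₀ y₀ : EuclideanSpace ℝ (Fin n))
    (hx₀ : ∀ i : Fin n, n - k ≤ (i : ℕ) → x₀ i = 0)
    (hy₀ : ∀ i : Fin n, (i : ℕ) < n - k → y₀ i = 0)
    (ξ ξd η ηd ζ ζd : ℝ → EuclideanSpace ℝ (Fin n))
    (hξ : ∀ s, ∀ i : Fin n, ξ s i = Real.exp (-(s * a i)) * x₀ i)
    (hξd : ∀ s, ∀ i : Fin n, ξd s i = -(a i * ξ s i))
    (hη : ∀ s, ∀ i : Fin n, η s i = Real.exp (-(s * a i)) * y₀ i)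
    (hηd : ∀ s, ∀ i : Fin n, ηd s i = -(a i * η s i))
    (hζ : ∀ s, ∀ i : Fin n,
      ζ s i = Real.exp (-((s + T) * a i)) * x₀ i + Real.exp (-((s - T) * a i)) * y₀ i)
    (hζd : ∀ s, ∀ i : Fin n, ζd s i = -(a i * ζ s i)) :
    (1 - Real.exp (-(12 * σ))) *
        ((∫ s in Ioi (0:ℝ), (‖ξ s‖ ^ 2 + ‖ξd s‖ ^ 2)) +
         (∫ s in Iio (0:ℝ), (‖η s‖ ^ 2 + ‖ηd s‖ ^ 2))) ≤
      (∫ s in (-T)..T, (‖ζ s‖ ^ 2 + ‖ζd s‖ ^ 2)) ∧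
    (∫ s in (-T)..T, (‖ζ s‖ ^ 2 + ‖ζd s‖ ^ 2)) ≤
      (∫ s in Ioi (0:ℝ), (‖ξ s‖ ^ 2 + ‖ξd s‖ ^ 2)) +
      (∫ s in Iio (0:ℝ), (‖η s‖ ^ 2 + ‖ηd s‖ ^ 2)) := by
  haveI : Nonempty (Fin n) := ⟨⟨0, hn⟩⟩
  -- the spectral gap is positive
  have hane : ∀ i : Fin n, a i ≠ 0 := by
    intro i
    rcases lt_or_ge ((i : ℕ)) (n - k) with h | h
    · exact (ha_pos i h).ne'
    · exact (ha_neg i h).ne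
  have hbdd : BddBelow (Set.range fun i : Fin n => |a i|) :=
    (Set.finite_range _).bddBelow
  have hσle : ∀ i : Fin n, σ ≤ |a i| := fun i => hσ ▸ ciInf_le hbdd i
  obtain ⟨j, _, hj⟩ := Finset.exists_min_image Finset.univ (fun i : Fin n => |a i|)
    ⟨Classical.arbitrary (Fin n), Finset.mem_univ _⟩
  have hσpos : 0 < σ := by
    rw [hσ]
    exact lt_of_lt_of_le (abs_pos.mpr (hane j)) (le_ciInf fun i => hj i (Finset.mem_univ i))
  -- disjoint supports
  have hxy : ∀ i : Fin n, x₀ i * y₀ i = 0 := by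
    intro i
    rcases lt_or_ge ((i : ℕ)) (n - k) with h | h
    · rw [hy₀ i h, mul_zero]
    · rw [hx₀ i h, zero_mul]
  -- coefficient functions
  set c1 : Fin n → ℝ := fun i => (1 + (a i) ^ 2) * (x₀ i) ^ 2 with hc1def
  set c2 : Fin n → ℝ := fun i => (1 + (a i) ^ 2) * (y₀ i) ^ 2 with hc2def
  have hc1 : ∀ i, 0 ≤ c1 i := fun i => by simp only [hc1def]; positivity
  have hc2 : ∀ i, 0 ≤ c2 i := fun i => by simp only [hc2def]; positivity
  have hb1 : ∀ i, c1 i ≠ 0 → σ ≤ a i := by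
    intro i h
    have hx : x₀ i ≠ 0 := by
      intro hx; apply h; simp [hc1def, hx]
    have hlt : (i : ℕ) < n - k := by
      by_contra hcon
      exact hx (hx₀ i (le_of_not_gt hcon))
    calc σ ≤ |a i| := hσle i
      _ = a i := abs_of_pos (ha_pos i hlt)
  have hb2 : ∀ i, c2 i ≠ 0 → σ ≤ -a i := by
    intro i h
    have hy : y₀ i ≠ 0 := by
      intro hy; apply h; simp [hc2def, hy]
    have hge : n - k ≤ (i : ℕ) := by
      by_contra hcon
      exact hy (hy₀ i (lt_of_not_ge hcon))
    calc σ ≤ |a i| := hσle i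
      _ = -a i := abs_of_neg (ha_neg i hge)
  -- pointwise identities
  have hξF : ∀ s : ℝ, ‖ξ s‖ ^ 2 + ‖ξd s‖ ^ 2 = ∑ i, c1 i * Real.exp (-(2 * a i) * s) := by
    intro s
    rw [norm_sq_eucl, norm_sq_eucl, ← Finset.sum_add_distrib]
    refine Finset.sum_congr rfl fun i _ => ?_
    rw [hξd s i, hξ s i]
    have he : Real.exp (-(2 * a i) * s) = Real.exp (-(s * a i)) * Real.exp (-(s * a i)) := by
      rw [← Real.exp_add]; ring_nf
    rw [he, hc1def]; ring
  have hηG : ∀ s : ℝ, ‖η s‖ ^ 2 + ‖ηd s‖ ^ 2 =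
      ∑ i, c2 i * Real.exp (-(2 * (-a i)) * (-s)) := by
    intro s
    rw [norm_sq_eucl, norm_sq_eucl, ← Finset.sum_add_distrib]
    refine Finset.sum_congr rfl fun i _ => ?_
    rw [hηd s i, hη s i]
    have he : Real.exp (-(2 * (-a i)) * (-s)) =
        Real.exp (-(s * a i)) * Real.exp (-(s * a i)) := by
      rw [← Real.exp_add]; ring_nf
    rw [he, hc2def]; ring
  have hζFG : ∀ s : ℝ, ‖ζ s‖ ^ 2 + ‖ζd s‖ ^ 2 =
      (∑ i, c1 i * Real.exp (-(2 * a i) * (s + T))) +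
      (∑ i, c2 i * Real.exp (-(2 * (-a i)) * (T - s))) := by
    intro s
    rw [norm_sq_eucl, norm_sq_eucl, ← Finset.sum_add_distrib, ← Finset.sum_add_distrib]
    refine Finset.sum_congr rfl fun i _ => ?_
    rw [hζd s i, hζ s i]
    have hp : Real.exp (-(2 * a i) * (s + T)) =
        Real.exp (-((s + T) * a i)) * Real.exp (-((s + T) * a i)) := by
      rw [← Real.exp_add]; ring_nf
    have hq : Real.exp (-(2 * (-a i)) * (T - s)) =
        Real.exp (-((s - T) * a i)) * Real.exp (-((s - T) * a i)) := by
      rw [← Real.exp_add]; ring_nf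
    rw [hp, hq, hc1def, hc2def]
    have h0 := hxy i
    linear_combination (2 * (1 + (a i) ^ 2) *
      Real.exp (-((s + T) * a i)) * Real.exp (-((s - T) * a i))) * h0
  -- rewrite the three integrals
  have Iξ : (∫ s in Ioi (0:ℝ), (‖ξ s‖ ^ 2 + ‖ξd s‖ ^ 2)) =
      ∫ u in Ioi (0:ℝ), ∑ i, c1 i * Real.exp (-(2 * a i) * u) :=
    integral_congr_ae (Filter.Eventually.of_forall fun s => hξF s)
  have Iη : (∫ s in Iio (0:ℝ), (‖η s‖ ^ 2 + ‖ηd s‖ ^ 2)) =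
      ∫ u in Ioi (0:ℝ), ∑ i, c2 i * Real.exp (-(2 * (-a i)) * u) := by
    rw [integral_congr_ae (Filter.Eventually.of_forall fun s => hηG s),
      setIntegral_congr_set Iio_ae_eq_Iic,
      integral_comp_neg_Iic 0 (fun u => ∑ i, c2 i * Real.exp (-(2 * (-a i)) * u)),
      neg_zero]
  have hc1cont : Continuous fun u : ℝ => ∑ i, c1 i * Real.exp (-(2 * a i) * u) := by
    apply continuous_finset_sum
    intro i _
    exact continuous_const.mul (Real.continuous_exp.comp (continuous_const.mul continuous_id))
  have hc2cont : Continuous fun u : ℝ => ∑ i, c2 i * Real.exp (-(2 * (-a i)) * u) := by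
    apply continuous_finset_sum
    intro i _
    exact continuous_const.mul (Real.continuous_exp.comp (continuous_const.mul continuous_id))
  have Iζ : (∫ s in (-T)..T, (‖ζ s‖ ^ 2 + ‖ζd s‖ ^ 2)) =
      (∫ u in Ioc (0:ℝ) (2*T), ∑ i, c1 i * Real.exp (-(2 * a i) * u)) +
      (∫ u in Ioc (0:ℝ) (2*T), ∑ i, c2 i * Real.exp (-(2 * (-a i)) * u)) := by
    rw [intervalIntegral.integral_congr (g := fun s =>
        (∑ i, c1 i * Real.exp (-(2 * a i) * (s + T))) +
        (∑ i, c2 i * Real.exp (-(2 * (-a i)) * (T - s)))) (fun s _ => hζFG s)]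
    have hI1 : IntervalIntegrable
        (fun s : ℝ => ∑ i, c1 i * Real.exp (-(2 * a i) * (s + T))) volume (-T) T :=
      (continuous_finset_sum _ fun i _ => by fun_prop).intervalIntegrable _ _
    have hI2 : IntervalIntegrable
        (fun s : ℝ => ∑ i, c2 i * Real.exp (-(2 * (-a i)) * (T - s))) volume (-T) T :=
      (continuous_finset_sum _ fun i _ => by fun_prop).intervalIntegrable _ _
    rw [intervalIntegral.integral_add hI1 hI2]
    have e1 : (∫ s in (-T)..T, ∑ i, c1 i * Real.exp (-(2 * a i) * (s + T)))
        = ∫ u in Ioc (0:ℝ) (2*T), ∑ i, c1 i * Real.exp (-(2 * a i) * u) := by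
      have h := intervalIntegral.integral_comp_add_right (a := -T) (b := T)
        (fun u => ∑ i, c1 i * Real.exp (-(2 * a i) * u)) T
      simp only [neg_add_cancel] at h
      rw [show T + T = 2*T from by ring] at h
      rw [h, intervalIntegral.integral_of_le (by linarith : (0:ℝ) ≤ 2*T)]
    have e2 : (∫ s in (-T)..T, ∑ i, c2 i * Real.exp (-(2 * (-a i)) * (T - s)))
        = ∫ u in Ioc (0:ℝ) (2*T), ∑ i, c2 i * Real.exp (-(2 * (-a i)) * u) := by
      have h := intervalIntegral.integral_comp_sub_left (a := -T) (b := T)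
        (fun u => ∑ i, c2 i * Real.exp (-(2 * (-a i)) * u)) T
      simp only [sub_self, sub_neg_eq_add] at h
      rw [show T + T = 2*T from by ring] at h
      rw [h, intervalIntegral.integral_of_le (by linarith : (0:ℝ) ≤ 2*T)]
    rw [e1, e2]
  have h1 := aux_main a c1 hc1 σ T hσpos hT hb1
  have h2 := aux_main (fun i => -a i) c2 hc2 σ T hσpos hT hb2
  rw [Iξ, Iη, Iζ]
  constructor
  · calc (1 - Real.exp (-(12 * σ))) *
        ((∫ u in Ioi (0:ℝ), ∑ i, c1 i * Real.exp (-(2 * a i) * u)) +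
         (∫ u in Ioi (0:ℝ), ∑ i, c2 i * Real.exp (-(2 * (-a i)) * u))) =
        (1 - Real.exp (-(12 * σ))) *
          (∫ u in Ioi (0:ℝ), ∑ i, c1 i * Real.exp (-(2 * a i) * u)) +
        (1 - Real.exp (-(12 * σ))) *
          (∫ u in Ioi (0:ℝ), ∑ i, c2 i * Real.exp (-(2 * (-a i)) * u)) := by ring
      _ ≤ _ := add_le_add h1.1 h2.1
  · exact add_le_add h1.2 h2.2
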